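/- Height bound: let p, r, s be pairwise coprime with r, s ≥ 1 and g = (r−1)s > 2, let d be prime to p, and let (x, y) ∈ 𝔽_q(t)² satisfy y^r = (x^s+1)(x^s+t^{ds})/x^s with x ≠ 0. Write x = u/v with u, v ∈ 𝔽_q[t] coprime, δ = max{deg u, deg v}. If x is not a p-th power in 𝔽_q(t), then δ ≤ (dg − 1)/(g − 2). -/

import Mathlib

open Polynomial UniqueFactorizationMonoid

namespace Stmt12Aux

lemma mem_pf {k : Type*} [Field k] [DecidableEq k] {w π : k[X]} (h : π ∈ primeFactors w) :
    π ∈ normalizedFactors w := by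
  rw [primeFactors] at h
  exact (@Multiset.mem_toFinset _ (Classical.decEq _) _ _).mp (by convert h)

lemma mem_pf' {k : Type*} [Field k] [DecidableEq k] {w π : k[X]} (h : π ∈ normalizedFactors w) :
    π ∈ primeFactors w := by
  rw [primeFactors]
  exact (@Multiset.mem_toFinset _ (Classical.decEq _) _ _).mpr h

lemma natDegree_assoc {k : Type*} [Field k] {a b : k[X]} (h : Associated a b) :
    a.natDegree = b.natDegree := by
  obtain ⟨c, hc⟩ := h
  rcases eq_or_ne a 0 with rfl | ha
  · simp at hc; simp [← hc]
  · rw [← hc, natDegree_mul ha (Units.ne_zero c), natDegree_eq_zero_of_isUnit c.isUnit, add_zero]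

lemma deg_eq_sum_counts {k : Type*} [Field k] [DecidableEq k] {w : k[X]} (hw : w ≠ 0) :
    w.natDegree = ∑ π ∈ primeFactors w, (normalizedFactors w).count π * π.natDegree := by
  classical
  have h0 : (0:k[X]) ∉ normalizedFactors w :=
    fun h => (prime_of_normalized_factor 0 h).ne_zero rfl
  have h1 : w.natDegree = ((normalizedFactors w).map natDegree).sum := by
    rw [← natDegree_assoc (prod_normalizedFactors hw)]
    exact (natDegree_multiset_prod _ h0).symm ▸ rfl
  rw [h1, Finset.sum_multiset_map_count]
  simp only [primeFactors, smul_eq_mul]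
  convert rfl

lemma raddeg {k : Type*} [Field k] [DecidableEq k] (w : k[X]) :
    (radical w).natDegree = ∑ π ∈ primeFactors w, π.natDegree := by
  rw [radical]
  exact natDegree_prod _ _ (fun π h => (prime_of_normalized_factor π (mem_pf h)).ne_zero)

lemma mem_pf_of_dvd {k : Type*} [Field k] [DecidableEq k] {F π : k[X]} (hF : F ≠ 0)
    (hp : Prime π) (hn : normalize π = π) (hdvd : π ∣ F) : π ∈ primeFactors F := by
  obtain ⟨q, hq, hassoc⟩ := exists_mem_normalizedFactors_of_dvd hF hp.irreducible hdvd
  have : π = q := hassoc.eq_of_normalized hn (normalize_normalized_factor q hq)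
  exact this ▸ mem_pf' hq

/-- Key radical-degree bound: if every normalized prime factor of `w` either divides an
exceptional polynomial `F` or occurs with multiplicity divisible by `r`, then
`r * deg (rad w) ≤ deg w + (r-1) * deg F`. -/
lemma rad_deg_bound {k : Type*} [Field k] [DecidableEq k] {w F : k[X]} (hw : w ≠ 0) (hF : F ≠ 0)
    {r : ℕ} (hr : 0 < r)
    (h : ∀ π ∈ normalizedFactors w, π ∣ F ∨ r ∣ (normalizedFactors w).count π) :
    r * (radical w).natDegree ≤ w.natDegree + (r - 1) * F.natDegree := by
  classical
  set pf := primeFactors w with hpf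
  set S1 := pf.filter (fun π => π ∣ F) with hS1
  set S2 := pf.filter (fun π => ¬ π ∣ F) with hS2
  have hsplit : r * (radical w).natDegree
      = (∑ π ∈ S1, r * π.natDegree) + (∑ π ∈ S2, r * π.natDegree) := by
    rw [raddeg, Finset.mul_sum, hS1, hS2, Finset.sum_filter_add_sum_filter_not]
  have hS2le : ∀ π ∈ S2, r * π.natDegree ≤ (normalizedFactors w).count π * π.natDegree := by
    intro π hπ
    rw [hS2, Finset.mem_filter] at hπ
    obtain ⟨hπpf, hndvd⟩ := hπ
    rcases h π (mem_pf hπpf) with hdvd | hcount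
    · exact absurd hdvd hndvd
    · have h1 : 1 ≤ (normalizedFactors w).count π := Multiset.one_le_count_iff_mem.mpr (mem_pf hπpf)
      exact Nat.mul_le_mul_right _ (Nat.le_of_dvd (by omega) hcount)
  have hS1le : (∑ π ∈ S1, r * π.natDegree)
      ≤ (r-1) * (∑ π ∈ S1, π.natDegree)
        + ∑ π ∈ S1, (normalizedFactors w).count π * π.natDegree := by
    rw [Finset.mul_sum, ← Finset.sum_add_distrib]
    refine Finset.sum_le_sum fun π hπ => ?_
    rw [hS1, Finset.mem_filter] at hπ
    have h1 : 1 ≤ (normalizedFactors w).count π := Multiset.one_le_count_iff_mem.mpr (mem_pf hπ.1)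
    have : r * π.natDegree = (r-1) * π.natDegree + 1 * π.natDegree := by
      rw [← add_mul]; congr 1; omega
    rw [this]
    exact Nat.add_le_add_left (Nat.mul_le_mul_right _ h1) _
  have hS1F : (∑ π ∈ S1, π.natDegree) ≤ F.natDegree := by
    have hsub : S1 ⊆ primeFactors F := by
      intro π hπ
      rw [hS1, Finset.mem_filter] at hπ
      exact mem_pf_of_dvd hF (prime_of_normalized_factor π (mem_pf hπ.1))
        (normalize_normalized_factor π (mem_pf hπ.1)) hπ.2
    calc (∑ π ∈ S1, π.natDegree) ≤ ∑ π ∈ primeFactors F, π.natDegree :=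
          Finset.sum_le_sum_of_subset hsub
      _ = (radical F).natDegree := (raddeg F).symm
      _ ≤ F.natDegree := natDegree_le_of_dvd (radical_dvd_self (a := F)) hF
  have hcounts : (∑ π ∈ S1, (normalizedFactors w).count π * π.natDegree)
      + (∑ π ∈ S2, (normalizedFactors w).count π * π.natDegree) = w.natDegree := by
    rw [hS1, hS2, Finset.sum_filter_add_sum_filter_not, ← deg_eq_sum_counts hw]
  calc r * (radical w).natDegree
      = (∑ π ∈ S1, r * π.natDegree) + (∑ π ∈ S2, r * π.natDegree) := hsplit
    _ ≤ ((r-1) * (∑ π ∈ S1, π.natDegree)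
          + ∑ π ∈ S1, (normalizedFactors w).count π * π.natDegree)
        + ∑ π ∈ S2, (normalizedFactors w).count π * π.natDegree :=
          Nat.add_le_add hS1le (Finset.sum_le_sum hS2le)
    _ ≤ (r-1) * F.natDegree + w.natDegree := by
        rw [add_assoc, hcounts]
        exact Nat.add_le_add_right (Nat.mul_le_mul_left _ hS1F) _
    _ = w.natDegree + (r-1) * F.natDegree := Nat.add_comm _ _

lemma count_rel {k : Type*} [Field k] [DecidableEq k] {r s : ℕ} {a b u v C D : k[X]}
    (ha : a ≠ 0) (hb : b ≠ 0) (hu : u ≠ 0) (hv : v ≠ 0) (hC : C ≠ 0) (hD : D ≠ 0)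
    (E : a ^ r * (u ^ s * v ^ s) = b ^ r * (C * D)) (π : k[X]) :
    r * (normalizedFactors a).count π + s * (normalizedFactors u).count π
      + s * (normalizedFactors v).count π
    = r * (normalizedFactors b).count π + (normalizedFactors C).count π
      + (normalizedFactors D).count π := by
  classical
  have hE := congrArg normalizedFactors E
  rw [normalizedFactors_mul (pow_ne_zero _ ha) (mul_ne_zero (pow_ne_zero _ hu) (pow_ne_zero _ hv)),
      normalizedFactors_mul (pow_ne_zero _ hu) (pow_ne_zero _ hv),
      normalizedFactors_mul (pow_ne_zero _ hb) (mul_ne_zero hC hD),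
      normalizedFactors_mul hC hD,
      normalizedFactors_pow, normalizedFactors_pow, normalizedFactors_pow,
      normalizedFactors_pow] at hE
  have := congrArg (Multiset.count π) hE
  simpa [Multiset.count_nsmul, Nat.add_assoc] using this

lemma pow_exhaust {G : Type*} [CommGroup G] {x w : G} {p s : ℕ} (hps : Nat.Coprime p s)
    (h : x ^ s = w ^ p) : ∃ z, z ^ p = x := by
  obtain ⟨m, n, hmn⟩ : ∃ m n : ℤ, (p:ℤ) * m + (s:ℤ) * n = 1 := by
    refine ⟨Int.gcdA p s, Int.gcdB p s, ?_⟩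
    rw [← Int.gcd_eq_gcd_ab]
    simp [Int.gcd_natCast_natCast, hps]
  refine ⟨x ^ m * w ^ n, ?_⟩
  have h1 : (x ^ m * w ^ n) ^ (p:ℤ) = x ^ ((p:ℤ)*m) * w ^ ((p:ℤ)*n) := by
    rw [mul_zpow, ← zpow_mul, ← zpow_mul, mul_comm m, mul_comm n]
  have h2 : w ^ ((p:ℤ)*n) = x ^ ((s:ℤ)*n) := by
    rw [zpow_mul, zpow_mul, zpow_natCast, zpow_natCast, h]
  calc (x ^ m * w ^ n) ^ p = (x ^ m * w ^ n) ^ (p:ℤ) := by norm_cast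
    _ = x ^ ((p:ℤ)*m + (s:ℤ)*n) := by rw [h1, h2, zpow_add]
    _ = x := by rw [hmn, zpow_one]

lemma pth_root_of_deriv_zero {k : Type*} [Field k] [Fintype k] (p : ℕ) [Fact p.Prime]
    [CharP k p] {f : k[X]} (hf : derivative f = 0) : ∃ g : k[X], g ^ p = f := by
  have h1 : expand k p (contract p f) = f := expand_contract p hf (Fact.out : p.Prime).ne_zero
  rw [polynomial_expand_eq] at h1
  exact ⟨_, h1⟩

end Stmt12Aux

open Stmt12Aux UniqueFactorizationDomain

set_option maxHeartbeats 1000000 in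
/-- Height bound (Theorem 3.1, non-`p`-th-power case): let `𝔽_q` have characteristic `p`,
with `p, r, s` pairwise coprime, `g = (r−1)s > 2`, `d` prime to `p`, and let
`(x, y) ∈ 𝔽_q(t)²` satisfy `y^r = (x^s+1)(x^s+t^{ds})/x^s` with `x ≠ 0`.  Write `x = u/v`
in lowest terms and `δ = max{deg u, deg v}`.  If `x` is not a `p`-th power in `𝔽_q(t)`,
then `δ ≤ (dg − 1)/(g − 2)`. -/
theorem stmt12 (Fq : Type*) [Field Fq] [Fintype Fq]
    (p : ℕ) [Fact p.Prime] [CharP Fq p]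
    (r s : ℕ) (hr : 1 ≤ r) (hs : 1 ≤ s)
    (hpr : Nat.Coprime p r) (hps : Nat.Coprime p s) (hrs : Nat.Coprime r s)
    (g : ℕ) (hg : g = (r - 1) * s) (hg2 : 2 < g)
    (d : ℕ) (hd : 0 < d) (hdp : Nat.Coprime d p)
    (x y : RatFunc Fq) (hx : x ≠ 0)
    (heq : y ^ r = (x ^ s + 1) * (x ^ s + (RatFunc.X : RatFunc Fq) ^ (d * s)) / x ^ s)
    (u v : Polynomial Fq) (huv : IsCoprime u v) (hv : v ≠ 0)
    (hxuv : x = algebraMap (Polynomial Fq) (RatFunc Fq) u /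
              algebraMap (Polynomial Fq) (RatFunc Fq) v)
    (δ : ℕ) (hδ : δ = max u.natDegree v.natDegree)
    (hnp : ¬ ∃ z : RatFunc Fq, z ^ p = x) :
    (δ : ℚ) ≤ ((d : ℚ) * g - 1) / ((g : ℚ) - 2) := by
  classical
  letI : DecidableEq Fq := Classical.decEq _
  -- basic setup
  have hr2 : 2 ≤ r := by
    rcases Nat.lt_or_ge r 2 with h | h
    · interval_cases r <;> simp_all <;> omega
    · exact h
  have hs0 : 0 < s := hs
  have hds0 : 0 < d * s := Nat.mul_pos hd hs0
  set φ := algebraMap (Polynomial Fq) (RatFunc Fq) with hφ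
  have hinj : Function.Injective φ := RatFunc.algebraMap_injective Fq
  have hV : φ v ≠ 0 := fun h => hv (hinj (by simpa using h))
  have hu : u ≠ 0 := by
    intro h; apply hx; rw [hxuv, h]; simp
  have hU : φ u ≠ 0 := fun h => hu (hinj (by simpa using h))
  have hXr : (RatFunc.X : RatFunc Fq) = φ Polynomial.X := (RatFunc.algebraMap_X (K := Fq)).symm
  have hnu : u.natDegree ≤ δ := hδ ▸ le_max_left _ _
  have hnv : v.natDegree ≤ δ := hδ ▸ le_max_right _ _
  -- it suffices to prove the key linear inequality in ℕ
  have main : ((g:ℚ) * δ + 1 ≤ 2 * δ + (d:ℚ) * g) → (δ : ℚ) ≤ ((d : ℚ) * g - 1) / ((g : ℚ) - 2) := by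
    intro key
    have hgq : (0:ℚ) < (g:ℚ) - 2 := by
      have : (2:ℚ) < (g:ℚ) := by exact_mod_cast hg2
      linarith
    rw [le_div_iff₀ hgq]
    nlinarith [key]
  by_cases hy : y = 0
  · -- y = 0 : degenerate cases
    rw [hy, zero_pow (by omega : r ≠ 0)] at heq
    have h0 : (x ^ s + 1) * (x ^ s + (RatFunc.X : RatFunc Fq) ^ (d * s)) = 0 := by
      rcases div_eq_zero_iff.mp heq.symm with h | h
      · exact h
      · exact absurd h (pow_ne_zero _ hx)
    rcases mul_eq_zero.mp h0 with h1 | h2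
    · -- x^s = -1 : both u, v are units
      have hps : (φ u) ^ s = -((φ v) ^ s) := by
        have : x ^ s = -1 := by linear_combination h1
        rw [hxuv, div_pow, div_eq_iff (pow_ne_zero _ hV)] at this
        linear_combination this
      have hpoly : u ^ s = -(v ^ s) := by
        apply hinj; rw [map_pow, map_neg, map_pow]; exact hps
      have huunit : IsUnit u := by
        refine (huv.pow_right (n := s)).isUnit_of_dvd ?_
        rw [← dvd_neg, ← hpoly]
        exact dvd_pow_self u (by omega)
      have hvunit : IsUnit v := by
        refine (huv.symm.pow_right (n := s)).isUnit_of_dvd ?_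
        rw [hpoly, dvd_neg]
        exact dvd_pow_self v (by omega)
      have hδ0 : δ = 0 := by
        rw [hδ, natDegree_eq_zero_of_isUnit huunit, natDegree_eq_zero_of_isUnit hvunit]; simp
      refine main ?_
      rw [hδ0]
      have h1dg : (1:ℚ) ≤ (d:ℚ) * g := by
        have : (1:ℕ) ≤ d * g := Nat.one_le_iff_ne_zero.mpr (Nat.mul_ne_zero (by omega) (by omega))
        exact_mod_cast this
      push_cast
      linarith
    · -- x^s = -X^{ds}
      have hps : (φ u) ^ s = -((φ Polynomial.X) ^ (d*s) * (φ v) ^ s) := by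
        have : x ^ s = -((RatFunc.X : RatFunc Fq) ^ (d*s)) := by linear_combination h2
        rw [hxuv, div_pow, div_eq_iff (pow_ne_zero _ hV), hXr] at this
        linear_combination this
      have hpoly : u ^ s = -(Polynomial.X ^ (d*s) * v ^ s) := by
        apply hinj; rw [map_pow, map_neg, map_mul, map_pow, map_pow]; exact hps
      have hvunit : IsUnit v := by
        refine (huv.symm.pow_right (n := s)).isUnit_of_dvd ?_
        have hdvd : v ∣ u ^ s := by
          rw [hpoly, dvd_neg]
          exact Dvd.dvd.mul_left (dvd_pow_self v (by omega)) _
        exact hdvd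
      have hnv0 : v.natDegree = 0 := natDegree_eq_zero_of_isUnit hvunit
      have hnud : u.natDegree = d := by
        have h3 : (u ^ s).natDegree = (Polynomial.X ^ (d*s) * v ^ s : Polynomial Fq).natDegree := by
          rw [hpoly, natDegree_neg]
        rw [natDegree_pow, natDegree_mul (pow_ne_zero _ X_ne_zero) (pow_ne_zero _ hv),
            natDegree_pow, natDegree_pow, natDegree_X, hnv0] at h3
        have h4 : s * u.natDegree = s * d := by rw [h3]; ring
        exact Nat.eq_of_mul_eq_mul_left hs0 h4
      have hδd : δ = d := by rw [hδ, hnud, hnv0]; simp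
      refine main ?_
      rw [hδd]
      have h1d : (1:ℚ) ≤ (d:ℚ) := by exact_mod_cast hd
      push_cast
      nlinarith [h1d]
  · -- main case : y ≠ 0
    set a := y.num with han
    set b := y.denom with hbn
    have hb : b ≠ 0 := y.denom_ne_zero
    have ha : a ≠ 0 := RatFunc.num_ne_zero hy
    have hyab : y = φ a / φ b := (RatFunc.num_div_denom y).symm
    have hA : φ a ≠ 0 := fun h => ha (hinj (by simpa using h))
    have hB : φ b ≠ 0 := fun h => hb (hinj (by simpa using h))
    have E0 : (φ a)^r * ((φ u)^s * (φ v)^s)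
        = (φ b)^r * (((φ u)^s + (φ v)^s) * ((φ u)^s + (φ Polynomial.X)^(d*s) * (φ v)^s)) := by
      rw [hyab, hxuv, hXr] at heq
      simp only [div_pow] at heq
      field_simp at heq
      apply mul_right_cancel₀ (pow_ne_zero s hV)
      linear_combination (φ v)^s * heq
    set C := u^s + v^s with hCdef
    set D := u^s + Polynomial.X^(d*s) * v^s with hDdef
    have E : a^r * (u^s * v^s) = b^r * (C * D) := by
      apply hinj
      rw [hCdef, hDdef]
      push_cast [map_mul, map_pow, map_add] at E0 ⊢
      exact E0
    have hCD : C * D ≠ 0 := by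
      intro h
      have hL : a ^ r * (u ^ s * v ^ s) ≠ 0 :=
        mul_ne_zero (pow_ne_zero _ ha) (mul_ne_zero (pow_ne_zero _ hu) (pow_ne_zero _ hv))
      rw [E, h, mul_zero] at hL
      exact hL rfl
    have hC : C ≠ 0 := fun h => hCD (by rw [h, zero_mul])
    have hD : D ≠ 0 := fun h => hCD (by rw [h, mul_zero])
    -- count divisibility facts
    have cnt0 : ∀ {π w : Polynomial Fq}, ¬ π ∣ w → (normalizedFactors w).count π = 0 := by
      intro π w h
      exact Multiset.count_eq_zero.mpr (fun hmem => h (dvd_of_mem_normalizedFactors hmem))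
    have fact_v : ∀ π ∈ normalizedFactors v, π ∣ (1 : Polynomial Fq)
        ∨ r ∣ (normalizedFactors v).count π := by
      intro π hπ
      right
      have hp := prime_of_normalized_factor π hπ
      have hπv : π ∣ v := dvd_of_mem_normalizedFactors hπ
      have hπu : ¬ π ∣ u := fun h => hp.not_unit (huv.isUnit_of_dvd' h hπv)
      have hπC : ¬ π ∣ C := by
        intro h
        apply hπu
        refine hp.dvd_of_dvd_pow (n := s) ?_
        have : u ^ s = C - v ^ s := by rw [hCdef]; ring
        rw [this]
        exact dvd_sub h (Dvd.dvd.pow hπv (by omega))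
      have hπD : ¬ π ∣ D := by
        intro h
        apply hπu
        refine hp.dvd_of_dvd_pow (n := s) ?_
        have : u ^ s = D - Polynomial.X^(d*s) * v ^ s := by rw [hDdef]; ring
        rw [this]
        exact dvd_sub h (Dvd.dvd.mul_left (Dvd.dvd.pow hπv (by omega)) _)
      have crel := count_rel ha hb hu hv hC hD E π
      rw [cnt0 hπu, cnt0 hπC, cnt0 hπD] at crel
      simp only [Nat.mul_zero, Nat.add_zero, Nat.zero_add] at crel
      have crel2 : s * (normalizedFactors v).count π
          + r * (normalizedFactors a).count π = r * (normalizedFactors b).count π := by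
        rw [Nat.add_comm]; exact crel
      have hsub := Nat.eq_sub_of_add_eq crel2
      have hdvd : r ∣ s * (normalizedFactors v).count π := by
        rw [hsub]; exact Nat.dvd_sub (dvd_mul_right r _) (dvd_mul_right r _)
      exact hrs.dvd_of_dvd_mul_left hdvd
    have fact_u : ∀ π ∈ normalizedFactors u, π ∣ (Polynomial.X : Polynomial Fq)
        ∨ r ∣ (normalizedFactors u).count π := by
      intro π hπ
      by_cases hXdvd : π ∣ (Polynomial.X : Polynomial Fq)
      · exact Or.inl hXdvd
      right
      have hp := prime_of_normalized_factor π hπ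
      have hπu : π ∣ u := dvd_of_mem_normalizedFactors hπ
      have hπv : ¬ π ∣ v := fun h => hp.not_unit (huv.isUnit_of_dvd' hπu h)
      have hπC : ¬ π ∣ C := by
        intro h
        apply hπv
        refine hp.dvd_of_dvd_pow (n := s) ?_
        have : v ^ s = C - u ^ s := by rw [hCdef]; ring
        rw [this]
        exact dvd_sub h (Dvd.dvd.pow hπu (by omega))
      have hπD : ¬ π ∣ D := by
        intro h
        have : π ∣ Polynomial.X^(d*s) * v ^ s := by
          have h2 : Polynomial.X^(d*s) * v ^ s = D - u ^ s := by rw [hDdef]; ring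
          rw [h2]
          exact dvd_sub h (Dvd.dvd.pow hπu (by omega))
        rcases hp.dvd_mul.mp this with h3 | h3
        · exact hXdvd (hp.dvd_of_dvd_pow h3)
        · exact hπv (hp.dvd_of_dvd_pow h3)
      have crel := count_rel ha hb hu hv hC hD E π
      rw [cnt0 hπv, cnt0 hπC, cnt0 hπD] at crel
      simp only [Nat.mul_zero, Nat.add_zero, Nat.zero_add] at crel
      have crel2 : s * (normalizedFactors u).count π
          + r * (normalizedFactors a).count π = r * (normalizedFactors b).count π := by
        rw [Nat.add_comm]; exact crel
      have hsub := Nat.eq_sub_of_add_eq crel2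
      have hdvd : r ∣ s * (normalizedFactors u).count π := by
        rw [hsub]; exact Nat.dvd_sub (dvd_mul_right r _) (dvd_mul_right r _)
      exact hrs.dvd_of_dvd_mul_left hdvd
    set F : Polynomial Fq := Polynomial.X ^ (d*s) - 1 with hFdef
    have hFne : F ≠ 0 := by
      intro h
      have : (Polynomial.X ^ (d*s) - 1 : Polynomial Fq).natDegree = d*s := by
        simpa using natDegree_X_pow_sub_C (n := d*s) (r := (1:Fq))
      rw [← hFdef, h, natDegree_zero] at this
      omega
    have hFdeg : F.natDegree = d * s := by
      simpa [hFdef] using natDegree_X_pow_sub_C (n := d*s) (r := (1:Fq))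
    have fact_C : ∀ π ∈ normalizedFactors C, π ∣ F ∨ r ∣ (normalizedFactors C).count π := by
      intro π hπ
      by_cases hFdvd : π ∣ F
      · exact Or.inl hFdvd
      right
      have hp := prime_of_normalized_factor π hπ
      have hπC : π ∣ C := dvd_of_mem_normalizedFactors hπ
      have hπu : ¬ π ∣ u := by
        intro h
        have hπv : π ∣ v := by
          refine hp.dvd_of_dvd_pow (n := s) ?_
          have : v ^ s = C - u ^ s := by rw [hCdef]; ring
          rw [this]
          exact dvd_sub hπC (Dvd.dvd.pow h (by omega))
        exact hp.not_unit (huv.isUnit_of_dvd' h hπv)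
      have hπv : ¬ π ∣ v := by
        intro h
        have hπu' : π ∣ u := by
          refine hp.dvd_of_dvd_pow (n := s) ?_
          have : u ^ s = C - v ^ s := by rw [hCdef]; ring
          rw [this]
          exact dvd_sub hπC (Dvd.dvd.pow h (by omega))
        exact hπu hπu'
      have hπD : ¬ π ∣ D := by
        intro h
        have hDC : D = C + F * v ^ s := by rw [hDdef, hCdef, hFdef]; ring
        have : π ∣ F * v ^ s := by
          have h2 : F * v ^ s = D - C := by rw [hDC]; ring
          rw [h2]
          exact dvd_sub h hπC
        rcases hp.dvd_mul.mp this with h3 | h3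
        · exact hFdvd h3
        · exact hπv (hp.dvd_of_dvd_pow h3)
      have crel := count_rel ha hb hu hv hC hD E π
      rw [cnt0 hπu, cnt0 hπv, cnt0 hπD] at crel
      simp only [Nat.mul_zero, Nat.add_zero, Nat.zero_add] at crel
      have crel2 : (normalizedFactors C).count π
          + r * (normalizedFactors b).count π = r * (normalizedFactors a).count π := by
        rw [Nat.add_comm]; exact crel.symm
      have hsub := Nat.eq_sub_of_add_eq crel2
      rw [hsub]
      exact Nat.dvd_sub (dvd_mul_right r _) (dvd_mul_right r _)
    -- apply Mason-Stothers
    set A := u ^ s with hAdef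
    set B := v ^ s with hBdef
    have hA0 : A ≠ 0 := pow_ne_zero _ hu
    have hB0 : B ≠ 0 := pow_ne_zero _ hv
    have hC0' : -(C) ≠ 0 := neg_ne_zero.mpr hC
    have hab : IsCoprime A B := huv.pow
    have haC : IsCoprime A C := by
      have := hab.add_mul_left_right 1
      simpa [hCdef, hAdef, hBdef, add_comm] using this
    have hbC : IsCoprime B C := by
      have := hab.symm.add_mul_left_right 1
      simpa [hCdef, hAdef, hBdef, add_comm] using this
    have hsum : A + B + (-(C)) = 0 := by rw [hCdef, hAdef, hBdef]; ring
    have habc := Polynomial.abc hA0 hB0 hC0' hab hsum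
    rcases habc with ⟨h1, h2, h3⟩ | ⟨hda, hdb, hdc⟩
    · -- Mason inequality branch
      set R0 := (radical (A * B * -(C))).natDegree with hR0
      have hrad : radical (A * B * -(C)) = radical u * radical v * radical C := by
        have e1 : A * B * -(C) = -(A * B * C) := by ring
        rw [e1, radical_neg, radical_mul (haC.mul_left hbC).isRelPrime, radical_mul hab.isRelPrime,
            hAdef, hBdef, radical_pow u hs0.ne', radical_pow v hs0.ne']
      have hR0eq : R0 = (radical u).natDegree + (radical v).natDegree
          + (radical C).natDegree := by
        rw [hR0, hrad, natDegree_mul (mul_ne_zero (radical_ne_zero (a := u)) (radical_ne_zero (a := v)))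
          (radical_ne_zero (a := C)), natDegree_mul (radical_ne_zero (a := u)) (radical_ne_zero (a := v))]
      have M : s * δ + 1 ≤ R0 := by
        rcases max_choice u.natDegree v.natDegree with hmax | hmax
        · have : δ = u.natDegree := by rw [hδ, hmax]
          rw [this]
          calc s * u.natDegree + 1 = A.natDegree + 1 := by rw [hAdef, natDegree_pow]
            _ ≤ R0 := h1
        · have : δ = v.natDegree := by rw [hδ, hmax]
          rw [this]
          calc s * v.natDegree + 1 = B.natDegree + 1 := by rw [hBdef, natDegree_pow]
            _ ≤ R0 := h2
      have Hu : r * (radical u).natDegree ≤ u.natDegree + (r-1) * 1 := by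
        have := rad_deg_bound hu (X_ne_zero : (Polynomial.X : Polynomial Fq) ≠ 0)
          (by omega : 0 < r) fact_u
        simpa using this
      rw [Nat.mul_one] at Hu
      have Hv : r * (radical v).natDegree ≤ v.natDegree := by
        have := rad_deg_bound hv (one_ne_zero : (1 : Polynomial Fq) ≠ 0)
          (by omega : 0 < r) fact_v
        simpa using this
      have HCdeg : C.natDegree ≤ s * δ := by
        calc C.natDegree ≤ max (u^s).natDegree (v^s).natDegree := natDegree_add_le _ _
          _ ≤ s * δ := by
              rw [natDegree_pow, natDegree_pow]
              rcases max_choice (s * u.natDegree) (s * v.natDegree) with h | h <;> rw [h] <;>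
                exact Nat.mul_le_mul_left s (by omega)
      have Hc : r * (radical C).natDegree ≤ s * δ + (r-1) * (d * s) := by
        have := rad_deg_bound hC hFne (by omega : 0 < r) fact_C
        rw [hFdeg] at this
        omega
      -- assemble
      refine main ?_
      have hr1 : ((r-1 : ℕ):ℚ) = (r:ℚ) - 1 := by
        push_cast [Nat.cast_sub hr]; ring
      have hgQ : (g:ℚ) = ((r:ℚ) - 1) * s := by
        rw [hg]; push_cast [Nat.cast_sub hr]; ring
      rw [hR0eq] at M
      have MQ : (s:ℚ) * δ + 1 ≤ ((radical u).natDegree : ℚ) + ((radical v).natDegree : ℚ)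
          + ((radical C).natDegree : ℚ) := by exact_mod_cast M
      have HuQ : (r:ℚ) * ((radical u).natDegree : ℚ) ≤ (u.natDegree : ℚ) + ((r:ℚ) - 1) := by
        rw [← hr1]; exact_mod_cast Hu
      have HvQ : (r:ℚ) * ((radical v).natDegree : ℚ) ≤ (v.natDegree : ℚ) := by exact_mod_cast Hv
      have HcQ : (r:ℚ) * ((radical C).natDegree : ℚ)
          ≤ (s:ℚ) * δ + ((r:ℚ) - 1) * ((d:ℚ) * s) := by
        rw [← hr1]; exact_mod_cast Hc
      have hnuQ : (u.natDegree : ℚ) ≤ (δ:ℚ) := by exact_mod_cast hnu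
      have hnvQ : (v.natDegree : ℚ) ≤ (δ:ℚ) := by exact_mod_cast hnv
      have hr0Q : (0:ℚ) ≤ (r:ℚ) := by positivity
      have P := mul_le_mul_of_nonneg_left MQ hr0Q
      rw [hgQ]
      ring_nf at P HuQ HvQ HcQ ⊢
      linarith [P, HuQ, HvQ, HcQ, hnuQ, hnvQ]
    · -- degenerate branch : u^s and v^s are p-th powers, contradiction
      exfalso
      obtain ⟨a1, ha1⟩ := pth_root_of_deriv_zero p hda
      obtain ⟨b1, hb1⟩ := pth_root_of_deriv_zero p hdb
      have ha1' : a1 ≠ 0 := by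
        intro h; rw [h] at ha1; exact hA0 (by rw [← ha1]; simp [(Fact.out : p.Prime).ne_zero])
      have hb1' : b1 ≠ 0 := by
        intro h; rw [h] at hb1; exact hB0 (by rw [← hb1]; simp [(Fact.out : p.Prime).ne_zero])
      have hA1 : φ a1 ≠ 0 := fun h => ha1' (hinj (by simpa using h))
      have hB1 : φ b1 ≠ 0 := fun h => hb1' (hinj (by simpa using h))
      set xu : (RatFunc Fq)ˣ := Units.mk0 x hx with hxu
      set wu : (RatFunc Fq)ˣ := Units.mk0 (φ a1 / φ b1) (div_ne_zero hA1 hB1) with hwu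
      have hval : x ^ s = ((φ a1) / (φ b1)) ^ p := by
        rw [hxuv, div_pow, div_pow, ← map_pow, ← map_pow, ← map_pow, ← map_pow, ha1, hb1,
          hAdef, hBdef]
      have hpow : xu ^ s = wu ^ p := by
        apply Units.ext
        rw [Units.val_pow_eq_pow_val, Units.val_pow_eq_pow_val, hxu, hwu, Units.val_mk0,
          Units.val_mk0]
        exact hval
      obtain ⟨z, hz⟩ := pow_exhaust hps hpow
      refine hnp ⟨(z : RatFunc Fq), ?_⟩
      rw [← Units.val_pow_eq_pow_val, hz, hxu, Units.val_mk0]
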